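/- (Bias is larger on the probability scale when excluding the third child.) Under the random coin toss assumption, Assumption 3, Assumption 4, and the mixed-sex preference assumption p_S > p_D, the excess over the binomial value is strictly larger for the two-child same-sex pattern than for the three-child same-sex pattern: μ((A ∩ B) ∪ (Aᶜ ∩ Bᶜ) | N3) − (p_M^2 + p_F^2) > μ((A ∩ B ∩ C) ∪ (Aᶜ ∩ Bᶜ ∩ Cᶜ) | N3) − (p_M^3 + p_F^3). -/

import Mathlib

open MeasureTheory

/-- Conditional probability: μ(X | Y) = μ(X ∩ Y) / μ(Y), as a real number. -/
noncomputable def cp {Ω : Type*} [MeasurableSpace Ω] (μ : Measure Ω) (X Y : Set Ω) : ℝ :=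
  (μ (X ∩ Y)).toReal / (μ Y).toReal

lemma cp_mul {Ω : Type*} [MeasurableSpace Ω] (μ : Measure Ω) {X Y : Set Ω} {p : ℝ}
    (h : cp μ X Y = p) (hY : 0 < (μ Y).toReal) :
    (μ (X ∩ Y)).toReal = p * (μ Y).toReal := by
  unfold cp at h
  rw [div_eq_iff hY.ne'] at h
  exact h

lemma toReal_split {Ω : Type*} [MeasurableSpace Ω] (μ : Measure Ω) [IsFiniteMeasure μ]
    (S T : Set Ω) (hT : MeasurableSet T) :
    (μ (S ∩ T)).toReal + (μ (S ∩ Tᶜ)).toReal = (μ S).toReal := by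
  rw [← ENNReal.toReal_add (measure_ne_top μ _) (measure_ne_top μ _), ← Set.diff_eq,
    measure_inter_add_diff S hT]

set_option maxHeartbeats 1000000 in
/-- under the random coin toss assumption, Assumptions 3 and 4, and
mixed-sex preference p_S > p_D, the excess over the binomial value is strictly larger
for the two-child same-sex pattern than for the three-child same-sex pattern. -/
theorem stmt_12 {Ω : Type*} [MeasurableSpace Ω] (μ : Measure Ω) [IsProbabilityMeasure μ]
(A B C N2 N3 : Set Ω)
    (hAm : MeasurableSet A) (hBm : MeasurableSet B) (hCm : MeasurableSet C)
    (hN2m : MeasurableSet N2) (hN3m : MeasurableSet N3)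
    (hsub : N3 ⊆ N2)
    (pM pF : ℝ) (hpM0 : 0 < pM) (hpM1 : pM < 1) (hpF : pF = 1 - pM)
    -- Assumption 1 (random coin toss):
    (h1 : (μ A).toReal = pM)
    (h2a : cp μ B (N2 ∩ A) = pM) (h2b : cp μ B (N2 ∩ Aᶜ) = pM)
    (h3a : cp μ C (N3 ∩ (A ∩ B)) = pM) (h3b : cp μ C (N3 ∩ (A ∩ Bᶜ)) = pM)
    (h3c : cp μ C (N3 ∩ (Aᶜ ∩ B)) = pM) (h3d : cp μ C (N3 ∩ (Aᶜ ∩ Bᶜ)) = pM)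
    -- Assumption 3:
    (h3' : cp μ N2 A = (μ N2).toReal)
    -- Assumption 4:
    (pS pD : ℝ) (hpS0 : 0 < pS) (hpS1 : pS ≤ 1) (hpD0 : 0 < pD) (hpD1 : pD ≤ 1)
    (h4a : cp μ N3 (N2 ∩ A ∩ B) = pS) (h4b : cp μ N3 (N2 ∩ Aᶜ ∩ Bᶜ) = pS)
    (h4c : cp μ N3 (N2 ∩ A ∩ Bᶜ) = pD) (h4d : cp μ N3 (N2 ∩ Aᶜ ∩ B) = pD)
    -- positivity of all conditioning events appearing:
    (posA : 0 < (μ A).toReal) (posN2 : 0 < (μ N2).toReal) (posN3 : 0 < (μ N3).toReal)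
    (posN2A : 0 < (μ (N2 ∩ A)).toReal) (posN2Ac : 0 < (μ (N2 ∩ Aᶜ)).toReal)
    (posN2AB : 0 < (μ (N2 ∩ A ∩ B)).toReal) (posN2AcBc : 0 < (μ (N2 ∩ Aᶜ ∩ Bᶜ)).toReal)
    (posN2ABc : 0 < (μ (N2 ∩ A ∩ Bᶜ)).toReal) (posN2AcB : 0 < (μ (N2 ∩ Aᶜ ∩ B)).toReal)
    (posN3AB : 0 < (μ (N3 ∩ (A ∩ B))).toReal) (posN3ABc : 0 < (μ (N3 ∩ (A ∩ Bᶜ))).toReal)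
    (posN3AcB : 0 < (μ (N3 ∩ (Aᶜ ∩ B))).toReal) (posN3AcBc : 0 < (μ (N3 ∩ (Aᶜ ∩ Bᶜ))).toReal)
    -- Assumption 2 (mixed-sex preference):
    (h2' : pS > pD) :
    cp μ ((A ∩ B) ∪ (Aᶜ ∩ Bᶜ)) N3 - (pM ^ 2 + pF ^ 2) >
      cp μ ((A ∩ B ∩ C) ∪ (Aᶜ ∩ Bᶜ ∩ Cᶜ)) N3 - (pM ^ 3 + pF ^ 3) := by
  subst hpF
  set t := (μ N2).toReal with ht_def
  -- layer 1
  have tA : (μ (N2 ∩ A)).toReal = t * pM := by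
    have h := cp_mul μ h3' posA; rw [h1] at h; exact h
  have tAc : (μ (N2 ∩ Aᶜ)).toReal = t * (1 - pM) := by
    have h := toReal_split μ N2 A hAm
    linear_combination h - tA
  -- layer 2
  have ab : (μ (N2 ∩ A ∩ B)).toReal = t * pM * pM := by
    have h := cp_mul μ h2a posN2A
    rw [Set.inter_comm B (N2 ∩ A)] at h
    linear_combination h + pM * tA
  have abc : (μ (N2 ∩ A ∩ Bᶜ)).toReal = t * pM * (1 - pM) := by
    have h := toReal_split μ (N2 ∩ A) B hBm
    linear_combination h - ab + tA
  have acb : (μ (N2 ∩ Aᶜ ∩ B)).toReal = t * (1 - pM) * pM := by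
    have h := cp_mul μ h2b posN2Ac
    rw [Set.inter_comm B (N2 ∩ Aᶜ)] at h
    linear_combination h + pM * tAc
  have acbc : (μ (N2 ∩ Aᶜ ∩ Bᶜ)).toReal = t * (1 - pM) * (1 - pM) := by
    have h := toReal_split μ (N2 ∩ Aᶜ) B hBm
    linear_combination h - acb + tAc
  -- N3 within N2 patterns
  have e : ∀ X Y : Set Ω, N3 ∩ (N2 ∩ X ∩ Y) = N3 ∩ (X ∩ Y) := by
    intro X Y; ext x; constructor
    · rintro ⟨h3, ⟨_, hX⟩, hY⟩; exact ⟨h3, hX, hY⟩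
    · rintro ⟨h3, hX, hY⟩; exact ⟨h3, ⟨hsub h3, hX⟩, hY⟩
  have n3ab : (μ (N3 ∩ (A ∩ B))).toReal = pS * (t * pM * pM) := by
    have h := cp_mul μ h4a posN2AB; rw [e A B] at h; rw [h, ab]
  have n3abc : (μ (N3 ∩ (A ∩ Bᶜ))).toReal = pD * (t * pM * (1 - pM)) := by
    have h := cp_mul μ h4c posN2ABc; rw [e A Bᶜ] at h; rw [h, abc]
  have n3acb : (μ (N3 ∩ (Aᶜ ∩ B))).toReal = pD * (t * (1 - pM) * pM) := by
    have h := cp_mul μ h4d posN2AcB; rw [e Aᶜ B] at h; rw [h, acb]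
  have n3acbc : (μ (N3 ∩ (Aᶜ ∩ Bᶜ))).toReal = pS * (t * (1 - pM) * (1 - pM)) := by
    have h := cp_mul μ h4b posN2AcBc; rw [e Aᶜ Bᶜ] at h; rw [h, acbc]
  -- total μ N3
  have t3 : (μ N3).toReal =
      pS * (t * pM * pM) + pD * (t * pM * (1 - pM)) + pD * (t * (1 - pM) * pM)
        + pS * (t * (1 - pM) * (1 - pM)) := by
    have hA := toReal_split μ N3 A hAm
    have hB1 := toReal_split μ (N3 ∩ A) B hBm
    have hB2 := toReal_split μ (N3 ∩ Aᶜ) B hBm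
    rw [Set.inter_assoc N3 A B, Set.inter_assoc N3 A Bᶜ] at hB1
    rw [Set.inter_assoc N3 Aᶜ B, Set.inter_assoc N3 Aᶜ Bᶜ] at hB2
    linear_combination -hA - hB1 - hB2 + n3ab + n3abc + n3acb + n3acbc
  -- third child
  have cab : (μ (C ∩ (N3 ∩ (A ∩ B)))).toReal = pM * (pS * (t * pM * pM)) := by
    have h := cp_mul μ h3a posN3AB
    rw [n3ab] at h; exact h
  have cacbc : (μ (C ∩ (N3 ∩ (Aᶜ ∩ Bᶜ)))).toReal
      = pM * (pS * (t * (1 - pM) * (1 - pM))) := by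
    have h := cp_mul μ h3d posN3AcBc
    rw [n3acbc] at h; exact h
  have ccacbc : (μ ((N3 ∩ (Aᶜ ∩ Bᶜ)) ∩ Cᶜ)).toReal
      = (1 - pM) * (pS * (t * (1 - pM) * (1 - pM))) := by
    have h := toReal_split μ (N3 ∩ (Aᶜ ∩ Bᶜ)) C hCm
    rw [Set.inter_comm (N3 ∩ (Aᶜ ∩ Bᶜ)) C] at h
    linear_combination h - cacbc + n3acbc
  -- two-child goal numerator
  have g2 : ((A ∩ B) ∪ (Aᶜ ∩ Bᶜ)) ∩ N3 = (N3 ∩ (A ∩ B)) ∪ (N3 ∩ (Aᶜ ∩ Bᶜ)) := by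
    ext x
    simp only [Set.mem_inter_iff, Set.mem_union, Set.mem_compl_iff]
    tauto
  have d2 : Disjoint (N3 ∩ (A ∩ B)) (N3 ∩ (Aᶜ ∩ Bᶜ)) := by
    rw [Set.disjoint_left]; rintro x ⟨_, hA, _⟩ ⟨_, hA', _⟩; exact hA' hA
  have m2 : (μ (((A ∩ B) ∪ (Aᶜ ∩ Bᶜ)) ∩ N3)).toReal
      = pS * (t * pM * pM) + pS * (t * (1 - pM) * (1 - pM)) := by
    rw [g2, measure_union d2 (hN3m.inter (hAm.compl.inter hBm.compl)),
      ENNReal.toReal_add (measure_ne_top μ _) (measure_ne_top μ _), n3ab, n3acbc]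
  -- three-child goal numerator
  have g3 : ((A ∩ B ∩ C) ∪ (Aᶜ ∩ Bᶜ ∩ Cᶜ)) ∩ N3
      = (C ∩ (N3 ∩ (A ∩ B))) ∪ ((N3 ∩ (Aᶜ ∩ Bᶜ)) ∩ Cᶜ) := by
    ext x
    simp only [Set.mem_inter_iff, Set.mem_union, Set.mem_compl_iff]
    tauto
  have d3 : Disjoint (C ∩ (N3 ∩ (A ∩ B))) ((N3 ∩ (Aᶜ ∩ Bᶜ)) ∩ Cᶜ) := by
    rw [Set.disjoint_left]; rintro x ⟨_, _, hA, _⟩ ⟨⟨_, hA', _⟩, _⟩; exact hA' hA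
  have m3 : (μ (((A ∩ B ∩ C) ∪ (Aᶜ ∩ Bᶜ ∩ Cᶜ)) ∩ N3)).toReal
      = pM * (pS * (t * pM * pM)) + (1 - pM) * (pS * (t * (1 - pM) * (1 - pM))) := by
    rw [g3, measure_union d3 ((hN3m.inter (hAm.compl.inter hBm.compl)).inter hCm.compl),
      ENNReal.toReal_add (measure_ne_top μ _) (measure_ne_top μ _), cab, ccacbc]
  -- put it together
  unfold cp
  rw [m2, m3, gt_iff_lt, sub_lt_sub_iff, div_add' _ _ _ posN3.ne', div_add' _ _ _ posN3.ne',
    div_lt_div_iff_of_pos_right posN3, t3]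
  have ht : 0 < t := posN2
  have key : 0 < t * (pM * (1 - pM)) * (2 * pM * (1 - pM)) * (pS - pD) := by
    have hF : (0:ℝ) < 1 - pM := by linarith
    have h1 : 0 < pM * (1 - pM) := mul_pos hpM0 hF
    have h2 : 0 < 2 * pM * (1 - pM) := mul_pos (mul_pos two_pos hpM0) hF
    exact mul_pos (mul_pos (mul_pos ht h1) h2) (sub_pos.mpr h2')
  rw [← sub_pos]
  convert key using 1
  · rfl
  ring
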